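/- Let G be a graph of maximum degree d, let {i,j} be an edge, and let N_ij be the set of edges incident to {i,j} (including {i,j} itself). For m ≥ 2, the number of ordered m-tuples of edges (e_1, ..., e_m) ∈ N_ij^m such that no vertex outside {i,j} appears in exactly one of the edges e_1,...,e_m is at most (2m√d)^m. -/

import Mathlib

set_option linter.unusedSectionVars false

open Finset

section Aux
variable {V : Type*} [Fintype V] [DecidableEq V] {G : SimpleGraph V} [DecidableRel G.Adj]
  {i j : V} {m : ℕ}

/-- outside vertex of an edge, if any -/
noncomputable def vtx (i j : V) (e : Sym2 V) : Option V :=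
  if h : ∃ v, v ∈ e ∧ v ≠ i ∧ v ≠ j then some h.choose else none

lemma edge_struct {e : Sym2 V} (heE : e ∈ G.edgeSet) (hei : i ∈ e ∨ j ∈ e) :
    e = s(i,j) ∨ ∃ x v, (x = i ∨ x = j) ∧ v ≠ i ∧ v ≠ j ∧ G.Adj x v ∧ e = s(x,v) := by
  induction e using Sym2.ind with
  | _ a b =>
    rw [SimpleGraph.mem_edgeSet] at heE
    simp only [Sym2.mem_iff] at hei
    have hab : a ≠ b := heE.ne
    by_cases hai : a = i
    · subst hai
      by_cases hbj : b = j
      · subst hbj; exact Or.inl rfl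
      · refine Or.inr ⟨a, b, Or.inl rfl, heE.ne', hbj, heE, rfl⟩
    · by_cases hbi : b = i
      · subst hbi
        by_cases haj : a = j
        · subst haj; exact Or.inl (Sym2.eq_swap)
        · exact Or.inr ⟨b, a, Or.inl rfl, heE.ne, haj, heE.symm, Sym2.eq_swap⟩
      · -- i ∉ {a,b}, so j ∈ {a,b}
        rcases hei with (h|h) | (h|h)
        · exact absurd h.symm hai
        · exact absurd h.symm hbi
        · exact Or.inr ⟨a, b, Or.inr h.symm, hbi, fun hbj => hab (hbj.trans h).symm, heE, rfl⟩
        · exact Or.inr ⟨b, a, Or.inr h.symm, hai, fun haj => hab (haj.trans h), heE.symm, Sym2.eq_swap⟩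

lemma vtx_unique {e : Sym2 V} (heE : e ∈ G.edgeSet) (hei : i ∈ e ∨ j ∈ e)
    {v w : V} (hv : v ∈ e) (hvi : v ≠ i) (hvj : v ≠ j)
    (hw : w ∈ e) (hwi : w ≠ i) (hwj : w ≠ j) : v = w := by
  rcases edge_struct heE hei with rfl | ⟨x, u, hx, hui, huj, _, rfl⟩
  · rw [Sym2.mem_iff] at hv; tauto
  · rw [Sym2.mem_iff] at hv hw
    rcases hx with rfl | rfl <;> rcases hv with rfl | rfl <;> rcases hw with rfl | rfl <;> tauto

lemma vtx_spec {e : Sym2 V} {v : V} (h : vtx i j e = some v) : v ∈ e ∧ v ≠ i ∧ v ≠ j := by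
  unfold vtx at h
  split at h
  · next hex => obtain rfl := Option.some.inj h; exact hex.choose_spec
  · exact absurd h (by simp)

lemma vtx_eq_some {e : Sym2 V} (heE : e ∈ G.edgeSet) (hei : i ∈ e ∨ j ∈ e)
    {v : V} (hv : v ∈ e) (hvi : v ≠ i) (hvj : v ≠ j) : vtx i j e = some v := by
  have hex : ∃ w, w ∈ e ∧ w ≠ i ∧ w ≠ j := ⟨v, hv, hvi, hvj⟩
  unfold vtx
  rw [dif_pos hex]
  obtain ⟨hw, hwi, hwj⟩ := hex.choose_spec
  exact congrArg some (vtx_unique heE hei hv hvi hvj hw hwi hwj).symm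

lemma vtx_eq_none {e : Sym2 V} (heE : e ∈ G.edgeSet) (hei : i ∈ e ∨ j ∈ e)
    (h : vtx i j e = none) : e = s(i,j) := by
  rcases edge_struct heE hei with rfl | ⟨x, u, hx, hui, huj, _, rfl⟩
  · rfl
  · have : vtx i j s(x,u) = some u :=
      vtx_eq_some heE hei (by rw [Sym2.mem_iff]; exact Or.inr rfl) hui huj
    rw [h] at this; exact absurd this (by simp)


def occ (t : Fin m → Sym2 V) (v : V) : Finset (Fin m) :=
  univ.filter (fun k => v ∈ t k)

noncomputable def minOcc (k₀ : Fin m) (t : Fin m → Sym2 V) (v : V) : Fin m :=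
  if h : (occ t v).Nonempty then (occ t v).min' h else k₀

lemma minOcc_mem {k₀ : Fin m} {t : Fin m → Sym2 V} {v : V} {k : Fin m} (h : v ∈ t k) :
    v ∈ t (minOcc k₀ t v) := by
  have hne : (occ t v).Nonempty := ⟨k, by simp [occ, h]⟩
  unfold minOcc
  rw [dif_pos hne]
  have := Finset.min'_mem _ hne
  simpa [occ] using this

abbrev Code (m : ℕ) (V : Type*) := Unit ⊕ (Fin m × Bool) ⊕ (Bool × V)

noncomputable def enc (i j : V) (k₀ : Fin m) (t : Fin m → Sym2 V) (k : Fin m) : Code m V :=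
  (vtx i j (t k)).elim (Sum.inl ()) fun v =>
    if minOcc k₀ t v = k then Sum.inr (Sum.inr (decide (i ∈ t k), v))
    else Sum.inr (Sum.inl (minOcc k₀ t v, decide (i ∈ t k)))

lemma enc_of_none {k₀ : Fin m} {t : Fin m → Sym2 V} {k : Fin m}
    (h : vtx i j (t k) = none) : enc i j k₀ t k = Sum.inl () := by
  simp [enc, h]

lemma enc_of_some_new {k₀ : Fin m} {t : Fin m → Sym2 V} {k : Fin m} {v : V}
    (h : vtx i j (t k) = some v) (hmo : minOcc k₀ t v = k) :
    enc i j k₀ t k = Sum.inr (Sum.inr (decide (i ∈ t k), v)) := by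
  simp [enc, h, hmo]

lemma enc_of_some_old {k₀ : Fin m} {t : Fin m → Sym2 V} {k : Fin m} {v : V}
    (h : vtx i j (t k) = some v) (hmo : minOcc k₀ t v ≠ k) :
    enc i j k₀ t k = Sum.inr (Sum.inl (minOcc k₀ t v, decide (i ∈ t k))) := by
  simp [enc, h, hmo]

/-- recover the edge from the "new" code data -/
lemma edge_of_some (hij : G.Adj i j) {t : Fin m → Sym2 V} {k : Fin m}
    (heE : t k ∈ G.edgeSet) (hei : i ∈ t k ∨ j ∈ t k) {v : V}
    (h : vtx i j (t k) = some v) :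
    t k = (if i ∈ t k then s(i, v) else s(j, v)) := by
  obtain ⟨hv, hvi, hvj⟩ := vtx_spec h
  rcases edge_struct heE hei with he | ⟨x, u, hx, hui, huj, hadj, he⟩
  · rw [he, Sym2.mem_iff] at hv; tauto
  · have hvu : v = u := by
      rw [he, Sym2.mem_iff] at hv
      rcases hx with rfl | rfl <;> rcases hv with rfl | rfl <;> tauto
    subst hvu
    rcases hx with hx | hx <;> rw [hx] at he
    · have hik : i ∈ t k := by rw [he, Sym2.mem_iff]; exact Or.inl rfl
      rw [if_pos hik]; exact he
    · have hik : i ∉ t k := by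
        rw [he, Sym2.mem_iff]
        push_neg
        exact ⟨hij.ne, fun hh => hvi hh.symm⟩
      rw [if_neg hik]; exact he

lemma enc_injective (hij : G.Adj i j) (k₀ : Fin m) {t t' : Fin m → Sym2 V}
    (hmem : ∀ k, t k ∈ G.edgeSet ∧ (i ∈ t k ∨ j ∈ t k))
    (hmem' : ∀ k, t' k ∈ G.edgeSet ∧ (i ∈ t' k ∨ j ∈ t' k))
    (henc : enc i j k₀ t = enc i j k₀ t') : t = t' := by
  funext k
  have hk := congrFun henc k
  rcases hv : vtx i j (t k) with _ | v <;> rcases hv' : vtx i j (t' k) with _ | v'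
  · rw [vtx_eq_none (hmem k).1 (hmem k).2 hv, vtx_eq_none (hmem' k).1 (hmem' k).2 hv']
  · rw [enc_of_none hv] at hk
    by_cases hmo : minOcc k₀ t' v' = k
    · rw [enc_of_some_new hv' hmo] at hk; exact absurd hk (by simp)
    · rw [enc_of_some_old hv' hmo] at hk; exact absurd hk (by simp)
  · rw [enc_of_none hv'] at hk
    by_cases hmo : minOcc k₀ t v = k
    · rw [enc_of_some_new hv hmo] at hk; exact absurd hk (by simp)
    · rw [enc_of_some_old hv hmo] at hk; exact absurd hk (by simp)
  · by_cases hmo : minOcc k₀ t v = k <;> by_cases hmo' : minOcc k₀ t' v' = k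
    · rw [enc_of_some_new hv hmo, enc_of_some_new hv' hmo'] at hk
      simp only [Sum.inr.injEq, Prod.mk.injEq] at hk
      obtain ⟨bd, vv⟩ := hk
      rw [edge_of_some hij (hmem k).1 (hmem k).2 hv,
        edge_of_some hij (hmem' k).1 (hmem' k).2 hv', vv]
      exact if_congr (decide_eq_decide.mp bd) rfl rfl
    · rw [enc_of_some_new hv hmo, enc_of_some_old hv' hmo'] at hk
      exact absurd hk (by simp)
    · rw [enc_of_some_old hv hmo, enc_of_some_new hv' hmo'] at hk
      exact absurd hk (by simp)
    · rw [enc_of_some_old hv hmo, enc_of_some_old hv' hmo'] at hk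
      simp only [Sum.inr.injEq, Sum.inl.injEq, Prod.mk.injEq] at hk
      obtain ⟨hm1, bd⟩ := hk
      -- compare codes at the common first-occurrence position
      obtain ⟨hvk, hvi, hvj⟩ := vtx_spec hv
      obtain ⟨hvk', hvi', hvj'⟩ := vtx_spec hv'
      have hvk1 : v ∈ t (minOcc k₀ t v) := minOcc_mem hvk
      have hvk1' : v' ∈ t' (minOcc k₀ t' v') := minOcc_mem hvk'
      have hsome1 : vtx i j (t (minOcc k₀ t v)) = some v :=
        vtx_eq_some (hmem _).1 (hmem _).2 hvk1 hvi hvj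
      have hsome1' : vtx i j (t' (minOcc k₀ t' v')) = some v' :=
        vtx_eq_some (hmem' _).1 (hmem' _).2 hvk1' hvi' hvj'
      have h1 := congrFun henc (minOcc k₀ t v)
      rw [enc_of_some_new hsome1 rfl, hm1, enc_of_some_new hsome1' rfl] at h1
      simp only [Sum.inr.injEq, Prod.mk.injEq] at h1
      rw [edge_of_some hij (hmem k).1 (hmem k).2 hv,
        edge_of_some hij (hmem' k).1 (hmem' k).2 hv', h1.2]
      exact if_congr (decide_eq_decide.mp bd) rfl rfl

def isNew : Code m V → Bool := fun c => match c with
  | Sum.inr (Sum.inr _) => true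
  | _ => false

noncomputable def newSet (i j : V) (k₀ : Fin m) (t : Fin m → Sym2 V) : Finset (Fin m) :=
  univ.filter (fun k => isNew (enc i j k₀ t k) = true)

lemma mem_newSet {k₀ k : Fin m} {t : Fin m → Sym2 V} :
    k ∈ newSet i j k₀ t ↔ ∃ v, vtx i j (t k) = some v ∧ minOcc k₀ t v = k := by
  rw [newSet, mem_filter]
  simp only [mem_univ, true_and]
  rcases hv : vtx i j (t k) with _ | v
  · rw [enc_of_none hv]; simp [isNew]
  · by_cases hmo : minOcc k₀ t v = k
    · rw [enc_of_some_new hv hmo]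
      simp only [isNew]
      exact ⟨fun _ => ⟨v, rfl, hmo⟩, fun _ => by simp⟩
    · rw [enc_of_some_old hv hmo]
      simp only [isNew]
      constructor
      · intro h; exact absurd h (by simp)
      · rintro ⟨v', hv', hmo'⟩
        obtain rfl := Option.some.inj hv'
        exact absurd hmo' hmo

lemma newSet_card (k₀ : Fin m) {t : Fin m → Sym2 V}
    (hmem : ∀ k, t k ∈ G.edgeSet ∧ (i ∈ t k ∨ j ∈ t k))
    (ht2 : ∀ v : V, v ≠ i → v ≠ j → (occ t v).card ≠ 1) :
    2 * (newSet i j k₀ t).card ≤ m := by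
  classical
  set F := newSet i j k₀ t with hF
  set vk : Fin m → V := fun k => (vtx i j (t k)).getD i with hvkdef
  have hvk : ∀ k ∈ F, vtx i j (t k) = some (vk k) ∧ minOcc k₀ t (vk k) = k := by
    intro k hk
    obtain ⟨v, hv, hmo⟩ := mem_newSet.mp hk
    have : vk k = v := by simp [hvkdef, hv]
    rw [this, hv]
    exact ⟨rfl, hmo⟩
  have hdisj : ∀ k ∈ F, ∀ k' ∈ F, k ≠ k' → Disjoint (occ t (vk k)) (occ t (vk k')) := by
    intro k hk k' hk' hne
    have hne' : vk k ≠ vk k' := by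
      intro h
      exact hne (by rw [← (hvk k hk).2, ← (hvk k' hk').2, h])
    rw [Finset.disjoint_left]
    intro a ha ha'
    rw [occ, mem_filter] at ha ha'
    have h1 := vtx_spec (hvk k hk).1
    have h2 := vtx_spec (hvk k' hk').1
    exact hne' (vtx_unique (hmem a).1 (hmem a).2 ha.2 h1.2.1 h1.2.2 ha'.2 h2.2.1 h2.2.2)
  have hcard2 : ∀ k ∈ F, 2 ≤ (occ t (vk k)).card := by
    intro k hk
    have h1 := vtx_spec (hvk k hk).1
    have hne : (occ t (vk k)).Nonempty := ⟨k, by rw [occ, mem_filter]; exact ⟨mem_univ _, h1.1⟩⟩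
    have hne1 := ht2 (vk k) h1.2.1 h1.2.2
    have hpos : 0 < (occ t (vk k)).card := Finset.card_pos.mpr hne
    omega
  calc 2 * F.card = ∑ _k ∈ F, 2 := by rw [Finset.sum_const, smul_eq_mul, mul_comm]
    _ ≤ ∑ k ∈ F, (occ t (vk k)).card := Finset.sum_le_sum hcard2
    _ = (F.biUnion (fun k => occ t (vk k))).card := (Finset.card_biUnion hdisj).symm
    _ ≤ (univ : Finset (Fin m)).card := Finset.card_le_card (subset_univ _)
    _ = m := by simp

def Anew (G : SimpleGraph V) [DecidableRel G.Adj] (i j : V) (m : ℕ) : Finset (Code m V) :=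
  (univ.filter (fun p : Bool × V => G.Adj (if p.1 then i else j) p.2)).image
    (fun p => Sum.inr (Sum.inr p))

def Bold (F : Finset (Fin m)) : Finset (Code m V) :=
  insert (Sum.inl ()) ((F ×ˢ (univ : Finset Bool)).image (fun p => Sum.inr (Sum.inl p)))

lemma card_Anew {d : ℕ} (hd : ∀ v, G.degree v ≤ d) : (Anew G i j m).card ≤ 2 * d := by
  refine le_trans Finset.card_image_le ?_
  have hsub : univ.filter (fun p : Bool × V => G.Adj (if p.1 then i else j) p.2) ⊆
      ({true} ×ˢ G.neighborFinset i) ∪ ({false} ×ˢ G.neighborFinset j) := by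
    rintro ⟨b, v⟩ hb
    rw [mem_filter] at hb
    cases b
    · exact Finset.mem_union_right _ (by
        rw [Finset.mem_product, SimpleGraph.mem_neighborFinset]
        exact ⟨Finset.mem_singleton_self _, by simpa using hb.2⟩)
    · exact Finset.mem_union_left _ (by
        rw [Finset.mem_product, SimpleGraph.mem_neighborFinset]
        exact ⟨Finset.mem_singleton_self _, by simpa using hb.2⟩)
  refine le_trans (Finset.card_le_card hsub) ?_
  refine le_trans (Finset.card_union_le _ _) ?_
  simp only [Finset.card_product, Finset.card_singleton, one_mul]
  have h1 := hd i
  have h2 := hd j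
  rw [← SimpleGraph.card_neighborFinset_eq_degree] at h1 h2
  omega

lemma card_Bold (F : Finset (Fin m)) : (Bold (V := V) F).card ≤ 2 * F.card + 1 := by
  refine le_trans (Finset.card_insert_le _ _) ?_
  have h1 := Finset.card_image_le (s := F ×ˢ (univ : Finset Bool))
    (f := fun p => (Sum.inr (Sum.inl p) : Code m V))
  rw [Finset.card_product] at h1
  simp only [Finset.card_univ, Fintype.card_bool] at h1
  omega

lemma enc_mem (hij : G.Adj i j) (k₀ : Fin m) {t : Fin m → Sym2 V}
    (hmem : ∀ k, t k ∈ G.edgeSet ∧ (i ∈ t k ∨ j ∈ t k)) (k : Fin m) :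
    enc i j k₀ t k ∈
      (if k ∈ newSet i j k₀ t then Anew G i j m else Bold (newSet i j k₀ t)) := by
  by_cases hk : k ∈ newSet i j k₀ t
  · rw [if_pos hk]
    obtain ⟨v, hv, hmo⟩ := mem_newSet.mp hk
    rw [enc_of_some_new hv hmo, Anew, Finset.mem_image]
    refine ⟨(decide (i ∈ t k), v), ?_, rfl⟩
    rw [mem_filter]
    refine ⟨mem_univ _, ?_⟩
    have he := edge_of_some hij (hmem k).1 (hmem k).2 hv
    have heE := (hmem k).1
    by_cases hik : i ∈ t k
    · rw [if_pos hik] at he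
      rw [he, SimpleGraph.mem_edgeSet] at heE
      simpa [hik] using heE
    · rw [if_neg hik] at he
      rw [he, SimpleGraph.mem_edgeSet] at heE
      simpa [hik] using heE
  · rw [if_neg hk]
    rcases hv : vtx i j (t k) with _ | v
    · rw [enc_of_none hv]
      exact Finset.mem_insert_self _ _
    · have hmo : minOcc k₀ t v ≠ k := fun h => hk (mem_newSet.mpr ⟨v, hv, h⟩)
      rw [enc_of_some_old hv hmo]
      apply Finset.mem_insert_of_mem
      rw [Finset.mem_image]
      refine ⟨(minOcc k₀ t v, decide (i ∈ t k)), ?_, rfl⟩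
      rw [Finset.mem_product]
      refine ⟨?_, mem_univ _⟩
      obtain ⟨hvk, hvi, hvj⟩ := vtx_spec hv
      have hvm : v ∈ t (minOcc k₀ t v) := minOcc_mem hvk
      exact mem_newSet.mpr ⟨v, vtx_eq_some (hmem _).1 (hmem _).2 hvm hvi hvj, rfl⟩

lemma card_TF {d : ℕ} (hd : ∀ v, G.degree v ≤ d) (F : Finset (Fin m)) :
    (Fintype.piFinset (fun k => if k ∈ F then Anew G i j m else Bold F)).card
      ≤ (2 * d) ^ F.card * (2 * F.card + 1) ^ (m - F.card) := by
  rw [Fintype.card_piFinset, ← Finset.prod_mul_prod_compl F]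
  have h1 : ∏ k ∈ F, (if k ∈ F then Anew G i j m else Bold F).card ≤ (2 * d) ^ F.card := by
    refine Finset.prod_le_pow_card _ _ _ ?_
    intro x hx; rw [if_pos hx]; exact card_Anew hd
  have h2 : ∏ k ∈ Fᶜ, (if k ∈ F then Anew G i j m else Bold F).card
      ≤ (2 * F.card + 1) ^ (m - F.card) := by
    have := Finset.prod_le_pow_card Fᶜ
      (fun k => (if k ∈ F then Anew G i j m else Bold F).card) (2 * F.card + 1) (by
        intro x hx
        rw [if_neg (Finset.mem_compl.mp hx)]
        exact card_Bold F)
    rwa [Finset.card_compl, Fintype.card_fin] at this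
  calc (∏ k ∈ F, (if k ∈ F then Anew G i j m else Bold F).card) *
        ∏ k ∈ Fᶜ, (if k ∈ F then Anew G i j m else Bold F).card
      ≤ (2 * d) ^ F.card * (2 * F.card + 1) ^ (m - F.card) := Nat.mul_le_mul h1 h2

lemma sum_bound (d m : ℕ) (hd1 : 1 ≤ d) (hm : 2 ≤ m) :
    ((∑ F ∈ (univ : Finset (Fin m)).powerset.filter (fun F => 2 * F.card ≤ m),
      (2 * d) ^ F.card * (2 * F.card + 1) ^ (m - F.card) : ℕ) : ℝ)
      ≤ (2 * (m : ℝ) * Real.sqrt d) ^ m := by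
  have hd0 : (0:ℝ) ≤ (d:ℝ) := Nat.cast_nonneg d
  have hsq : Real.sqrt d ^ 2 = (d:ℝ) := Real.sq_sqrt hd0
  have h1 : (1:ℝ) ≤ Real.sqrt d := by
    rw [show (1:ℝ) = Real.sqrt 1 by simp]
    exact Real.sqrt_le_sqrt (by exact_mod_cast hd1)
  have hd1' : (1:ℝ) ≤ (d:ℝ) := by exact_mod_cast hd1
  rcases eq_or_lt_of_le hm with hm2 | hm3
  · -- m = 2
    subst hm2
    have hset : ((univ : Finset (Fin 2)).powerset.filter (fun F => 2 * F.card ≤ 2))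
        = {∅, {0}, {1}} := by decide
    rw [hset, Finset.sum_insert (by decide), Finset.sum_insert (by decide),
      Finset.sum_singleton]
    have h16 : (2 * (2 : ℝ) * Real.sqrt d) ^ 2 = 16 * d := by
      rw [mul_pow, hsq]; norm_num
    push_cast
    rw [h16]
    norm_num
    linarith
  · -- 3 ≤ m
    have hm3' : 3 ≤ m := hm3
    have step1 : ((∑ F ∈ (univ : Finset (Fin m)).powerset.filter (fun F => 2 * F.card ≤ m),
        (2 * d) ^ F.card * (2 * F.card + 1) ^ (m - F.card) : ℕ) : ℝ)
        ≤ ∑ F ∈ (univ : Finset (Fin m)).powerset.filter (fun F => 2 * F.card ≤ m),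
          (2:ℝ) ^ F.card * (Real.sqrt d) ^ m * ((m:ℝ) + 1) ^ (m - F.card) := by
      rw [Nat.cast_sum]
      refine Finset.sum_le_sum ?_
      intro F hF
      have hFm : 2 * F.card ≤ m := (Finset.mem_filter.mp hF).2
      push_cast
      have e1 : ((2:ℝ) * d) ^ F.card = 2 ^ F.card * (Real.sqrt d) ^ (2 * F.card) := by
        rw [mul_pow, pow_mul, hsq]
      rw [e1]
      have e2 : (Real.sqrt d) ^ (2 * F.card) ≤ (Real.sqrt d) ^ m :=
        pow_le_pow_right₀ h1 hFm
      have e3 : ((2 * F.card + 1 : ℝ)) ^ (m - F.card) ≤ ((m:ℝ) + 1) ^ (m - F.card) := by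
        apply pow_le_pow_left₀ (by positivity)
        have h : 2 * F.card + 1 ≤ m + 1 := by omega
        exact_mod_cast h
      exact mul_le_mul (mul_le_mul_of_nonneg_left e2 (by positivity)) e3
        (by positivity) (by positivity)
    have step2 : ∑ F ∈ (univ : Finset (Fin m)).powerset.filter (fun F => 2 * F.card ≤ m),
          (2:ℝ) ^ F.card * (Real.sqrt d) ^ m * ((m:ℝ) + 1) ^ (m - F.card)
        ≤ ∑ F ∈ (univ : Finset (Fin m)).powerset,
          (2:ℝ) ^ F.card * (Real.sqrt d) ^ m * ((m:ℝ) + 1) ^ (m - F.card) :=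
      Finset.sum_le_sum_of_subset_of_nonneg (Finset.filter_subset _ _)
        (fun _ _ _ => by positivity)
    have step3 : ∑ F ∈ (univ : Finset (Fin m)).powerset,
          (2:ℝ) ^ F.card * (Real.sqrt d) ^ m * ((m:ℝ) + 1) ^ (m - F.card)
        = (Real.sqrt d) ^ m * ((m:ℝ) + 3) ^ m := by
      have hpa := Finset.prod_add (fun _ : Fin m => (2:ℝ)) (fun _ => (m:ℝ) + 1)
        (univ : Finset (Fin m))
      simp only [Finset.prod_const] at hpa
      rw [Finset.card_univ, Fintype.card_fin] at hpa
      have hterm : ∀ F ∈ (univ : Finset (Fin m)).powerset,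
          (2:ℝ) ^ F.card * ((m:ℝ) + 1) ^ ((univ : Finset (Fin m)) \ F).card
            = (2:ℝ) ^ F.card * ((m:ℝ) + 1) ^ (m - F.card) := by
        intro F hF
        rw [Finset.card_sdiff_of_subset (Finset.mem_powerset.mp hF), Finset.card_univ, Fintype.card_fin]
      rw [Finset.sum_congr rfl hterm] at hpa
      have : ∑ F ∈ (univ : Finset (Fin m)).powerset,
          (2:ℝ) ^ F.card * (Real.sqrt d) ^ m * ((m:ℝ) + 1) ^ (m - F.card)
          = (Real.sqrt d) ^ m * ∑ F ∈ (univ : Finset (Fin m)).powerset,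
            (2:ℝ) ^ F.card * ((m:ℝ) + 1) ^ (m - F.card) := by
        rw [Finset.mul_sum]
        exact Finset.sum_congr rfl (fun F _ => by ring)
      rw [this, show ((m:ℝ) + 3) = 2 + ((m:ℝ) + 1) by ring, hpa]
    have step4 : (Real.sqrt d) ^ m * ((m:ℝ) + 3) ^ m ≤ (2 * (m : ℝ) * Real.sqrt d) ^ m := by
      rw [mul_pow, mul_pow]
      have : ((m:ℝ) + 3) ^ m ≤ (2 ^ m) * (m:ℝ) ^ m := by
        rw [← mul_pow]
        apply pow_le_pow_left₀ (by positivity)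
        have : (3:ℝ) ≤ (m:ℝ) := by exact_mod_cast hm3'
        linarith
      calc (Real.sqrt d) ^ m * ((m:ℝ) + 3) ^ m
          ≤ (Real.sqrt d) ^ m * ((2 ^ m) * (m:ℝ) ^ m) :=
            mul_le_mul_of_nonneg_left this (by positivity)
        _ = 2 ^ m * (m:ℝ) ^ m * (Real.sqrt d) ^ m := by ring
    linarith [step1, step2, step3.le, step3.ge, step4]

end Aux

open scoped Classical in
theorem stmt0 {V : Type*} [Fintype V] [DecidableEq V]
    (G : SimpleGraph V) [DecidableRel G.Adj] (d : ℕ)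
    (hd : ∀ v : V, G.degree v ≤ d)
    (i j : V) (hij : G.Adj i j) (m : ℕ) (hm : 2 ≤ m)
    (Nij : Finset (Sym2 V))
    (hNij : Nij = G.edgeFinset.filter (fun e => i ∈ e ∨ j ∈ e)) :
    (((Finset.univ : Finset (Fin m → Sym2 V)).filter (fun t =>
        (∀ k, t k ∈ Nij) ∧
        ∀ v : V, v ≠ i → v ≠ j →
          (Finset.univ.filter (fun k => v ∈ t k)).card ≠ 1)).card : ℝ)
      ≤ (2 * m * Real.sqrt d) ^ m := by
  classical
  have hd1 : 1 ≤ d := by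
    have hpos : 0 < G.degree i := by
      rw [SimpleGraph.degree_pos_iff_exists_adj]
      exact ⟨j, hij⟩
    exact le_trans hpos (hd i)
  set k₀ : Fin m := ⟨0, by omega⟩ with hk₀
  set S := (Finset.univ : Finset (Fin m → Sym2 V)).filter (fun t =>
        (∀ k, t k ∈ Nij) ∧
        ∀ v : V, v ≠ i → v ≠ j →
          (Finset.univ.filter (fun k => v ∈ t k)).card ≠ 1) with hS
  set 𝓕 : Finset (Finset (Fin m)) :=
    (univ : Finset (Fin m)).powerset.filter (fun F => 2 * F.card ≤ m) with h𝓕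
  set T : Finset (Fin m) → Finset (Fin m → Code m V) :=
    fun F => Fintype.piFinset (fun k => if k ∈ F then Anew G i j m else Bold F) with hT
  -- extract hypotheses for members of S
  have hmemS : ∀ t ∈ S, (∀ k, t k ∈ G.edgeSet ∧ (i ∈ t k ∨ j ∈ t k)) ∧
      (∀ v : V, v ≠ i → v ≠ j → (occ t v).card ≠ 1) := by
    intro t ht
    rw [hS, Finset.mem_filter] at ht
    obtain ⟨-, ht1, ht2⟩ := ht
    constructor
    · intro k
      have := ht1 k
      rw [hNij, Finset.mem_filter, SimpleGraph.mem_edgeFinset] at this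
      exact this
    · intro v hvi hvj
      have := ht2 v hvi hvj
      rw [occ]
      convert this using 2
  have hmaps : ∀ t ∈ S, enc i j k₀ t ∈ 𝓕.biUnion T := by
    intro t ht
    obtain ⟨hmem, ht2⟩ := hmemS t ht
    rw [Finset.mem_biUnion]
    refine ⟨newSet i j k₀ t, ?_, ?_⟩
    · rw [h𝓕, Finset.mem_filter]
      exact ⟨Finset.mem_powerset.mpr (Finset.subset_univ _), newSet_card k₀ hmem ht2⟩
    · rw [hT]
      exact Fintype.mem_piFinset.mpr (enc_mem hij k₀ hmem)
  have hinj : Set.InjOn (enc i j k₀) S := by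
    intro t ht t' ht' h
    exact enc_injective hij k₀ (hmemS t ht).1 (hmemS t' ht').1 h
  have hcard : S.card ≤ ∑ F ∈ 𝓕, (2 * d) ^ F.card * (2 * F.card + 1) ^ (m - F.card) := by
    refine le_trans (Finset.card_le_card_of_injOn (enc i j k₀) hmaps hinj) ?_
    refine le_trans Finset.card_biUnion_le ?_
    exact Finset.sum_le_sum (fun F _ => card_TF hd F)
  calc (S.card : ℝ)
      ≤ ((∑ F ∈ 𝓕, (2 * d) ^ F.card * (2 * F.card + 1) ^ (m - F.card) : ℕ) : ℝ) := by
        exact_mod_cast hcard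
    _ ≤ (2 * (m : ℝ) * Real.sqrt d) ^ m := sum_bound d m hd1 hm
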